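/- Let h₁ : ℝ → ℝ be C¹ and suppose s²·h₁'(s)/log s → −L as s → ∞ for some L > 0. Then the limit K := lim_{s→∞} h₁(s) exists in ℝ, and moreover h₁(s) = K + L·(1 + log s)/s + o((1 + log s)/s) as s → ∞. -/

import Mathlib

open Filter Real MeasureTheory Set Asymptotics

theorem stmt_9 (h₁ : ℝ → ℝ) (hh₁ : ContDiff ℝ 1 h₁) (L : ℝ) (hL : 0 < L)
    (hlim : Tendsto (fun s => s ^ 2 * deriv h₁ s / Real.log s) atTop (nhds (-L))) :
    ∃ K : ℝ, Tendsto h₁ atTop (nhds K) ∧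
      (fun s => h₁ s - K - L * ((1 + Real.log s) / s)) =o[atTop]
        (fun s => (1 + Real.log s) / s) := by
  have hcont : Continuous (deriv h₁) := hh₁.continuous_deriv le_rfl
  have hdiff : Differentiable ℝ h₁ := hh₁.differentiable one_ne_zero
  -- eventually bounds
  have hq : ∀ᶠ s in atTop, |s ^ 2 * deriv h₁ s / Real.log s| ≤ L + 1 := by
    have := hlim.eventually (eventually_le_nhds (show -L < -L + 1 by linarith) :
      ∀ᶠ x in nhds (-L), x ≤ -L + 1)
    have h2 := hlim.eventually (eventually_ge_nhds (show -L - 1 < -L by linarith) :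
      ∀ᶠ x in nhds (-L), -L - 1 ≤ x)
    filter_upwards [this, h2] with s hs1 hs2
    rw [abs_le]; constructor <;> nlinarith
  have hlog : ∀ᶠ s in atTop, Real.log s ≤ s ^ ((1:ℝ)/2) := by
    have := (isLittleO_log_rpow_atTop (show (0:ℝ) < 1/2 by norm_num)).bound one_pos
    filter_upwards [this, eventually_ge_atTop (1:ℝ)] with s hs hs1
    have : ‖Real.log s‖ ≤ ‖s ^ ((1:ℝ)/2)‖ := by simpa using hs
    calc Real.log s ≤ |Real.log s| := le_abs_self _
      _ ≤ |s ^ ((1:ℝ)/2)| := this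
      _ = s ^ ((1:ℝ)/2) := abs_of_nonneg (Real.rpow_nonneg (by linarith) _)
  obtain ⟨a, ha⟩ := (hq.and (hlog.and (eventually_ge_atTop (2:ℝ)))).exists_forall_of_atTop
  have ha2 : (2:ℝ) ≤ a := (ha a le_rfl).2.2
  have ha0 : (0:ℝ) < a := by linarith
  -- pointwise bound on deriv
  have hbd : ∀ x ≥ a, ‖deriv h₁ x‖ ≤ (L + 1) * x ^ (-(3:ℝ)/2) := by
    intro x hx
    obtain ⟨hq', hlog', hx2⟩ := ha x hx
    have hx0 : (0:ℝ) < x := by linarith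
    have hlx : (0:ℝ) < Real.log x := Real.log_pos (by linarith)
    have heq : deriv h₁ x = (x ^ 2 * deriv h₁ x / Real.log x) * Real.log x / x ^ 2 := by
      field_simp
    rw [Real.norm_eq_abs, heq, abs_div, abs_mul, abs_of_pos hlx, abs_of_pos (by positivity : (0:ℝ) < x ^ 2)]
    have step1 : |x ^ 2 * deriv h₁ x / Real.log x| * Real.log x / x ^ 2 ≤
        (L + 1) * Real.log x / x ^ 2 := by
      apply div_le_div_of_nonneg_right ?_ (by positivity)
      exact mul_le_mul_of_nonneg_right hq' hlx.le
    refine step1.trans ?_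
    have step2 : (L + 1) * Real.log x / x ^ 2 ≤ (L + 1) * x ^ ((1:ℝ)/2) / x ^ 2 := by
      apply div_le_div_of_nonneg_right ?_ (by positivity)
      exact mul_le_mul_of_nonneg_left hlog' (by linarith)
    refine step2.trans ?_
    have : (L + 1) * x ^ ((1:ℝ)/2) / x ^ 2 = (L + 1) * x ^ (-(3:ℝ)/2) := by
      rw [← Real.rpow_natCast x 2, mul_div_assoc, ← Real.rpow_sub hx0]
      norm_num
    rw [this]
  -- integrability of deriv h₁ on Ioi a
  have hInt : IntegrableOn (deriv h₁) (Ioi a) := by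
    have hg : IntegrableOn (fun x : ℝ => (L + 1) * x ^ (-(3:ℝ)/2)) (Ioi a) :=
      (integrableOn_Ioi_rpow_of_lt (by norm_num) ha0).const_mul _
    refine hg.mono' hcont.aestronglyMeasurable.restrict ?_
    rw [ae_restrict_iff' measurableSet_Ioi]
    exact ae_of_all _ fun x hx => hbd x (le_of_lt hx)
  -- FTC & limit K
  have hie : ∀ t : ℝ, IntervalIntegrable (deriv h₁) volume a t :=
    fun t => hcont.intervalIntegrable a t
  have hFTC : ∀ t : ℝ, h₁ t = h₁ a + ∫ x in a..t, deriv h₁ x := by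
    intro t
    rw [intervalIntegral.integral_deriv_eq_sub (fun x _ => hdiff x) (hie t)]
    ring
  set K := h₁ a + ∫ x in Ioi a, deriv h₁ x with hKdef
  have hK : Tendsto h₁ atTop (nhds K) := by
    have := (intervalIntegral_tendsto_integral_Ioi a hInt tendsto_id).const_add (h₁ a)
    refine this.congr fun t => (hFTC t).symm
  refine ⟨K, hK, ?_⟩
  -- L'Hôpital
  set g : ℝ → ℝ := fun s => (1 + Real.log s) / s with hgdef
  have hgd : ∀ s : ℝ, 0 < s → HasDerivAt g (-Real.log s / s ^ 2) s := by
    intro s hs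
    have h1 : HasDerivAt (fun y : ℝ => 1 + Real.log y) s⁻¹ s :=
      (Real.hasDerivAt_log hs.ne').const_add 1
    have := h1.div (hasDerivAt_id s) hs.ne'
    refine this.congr_deriv ?_
    simp only [id]
    field_simp
    ring
  have hgderiv : ∀ᶠ s in atTop, deriv g s = -Real.log s / s ^ 2 := by
    filter_upwards [eventually_gt_atTop (0:ℝ)] with s hs
    exact (hgd s hs).deriv
  have hg'ne : ∀ᶠ s in atTop, deriv g s ≠ 0 := by
    filter_upwards [hgderiv, eventually_gt_atTop (1:ℝ)] with s hd hs
    rw [hd]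
    have hl : 0 < Real.log s := Real.log_pos hs
    have : -Real.log s / s ^ 2 < 0 := div_neg_of_neg_of_pos (by linarith) (by positivity)
    exact this.ne
  have hf0 : Tendsto (fun s => h₁ s - K) atTop (nhds 0) := by
    simpa using hK.sub_const K
  have hg0 : Tendsto g atTop (nhds 0) := by
    have h1 : Tendsto (fun s : ℝ => 1 / s) atTop (nhds 0) := by
      simpa [one_div] using (tendsto_inv_atTop_zero : Tendsto (fun s : ℝ => s⁻¹) atTop (nhds 0))
    have h2 : Tendsto (fun s : ℝ => Real.log s / s) atTop (nhds 0) :=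
      Real.isLittleO_log_id_atTop.tendsto_div_nhds_zero
    have := h1.add h2
    simp only [add_zero] at this
    refine this.congr fun s => ?_
    simp [hgdef, add_div]
  have hdivlim : Tendsto (fun s => deriv (fun x => h₁ x - K) s / deriv g s) atTop (nhds L) := by
    have hneg : Tendsto (fun s => -(s ^ 2 * deriv h₁ s / Real.log s)) atTop (nhds L) := by
      simpa using hlim.neg
    refine hneg.congr' ?_
    filter_upwards [hgderiv, eventually_gt_atTop (1:ℝ)] with s hd hs
    have hs0 : (0:ℝ) < s := by linarith
    have hl : 0 < Real.log s := Real.log_pos hs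
    rw [deriv_sub_const, hd]
    field_simp
  have hlhop : Tendsto (fun s => (h₁ s - K) / g s) atTop (nhds L) := by
    exact deriv.lhopital_zero_atTop
      (Eventually.of_forall fun s => (hdiff s).sub_const K) hg'ne hf0 hg0 hdivlim
  -- conclude littleO
  rw [Asymptotics.isLittleO_iff]
  intro ε hε
  have h1 : ∀ᶠ s in atTop, |(h₁ s - K) / g s - L| ≤ ε := by
    have := hlhop.sub_const L
    have : Tendsto (fun s => (h₁ s - K) / g s - L) atTop (nhds 0) := by simpa using this
    have := this.eventually (eventually_abs_sub_lt 0 hε)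
    filter_upwards [this] with s hs
    simpa using hs.le
  filter_upwards [h1, eventually_ge_atTop (1:ℝ)] with s hs hs1
  have hs0 : (0:ℝ) < s := by linarith
  have hgpos : 0 < g s := by
    have : (0:ℝ) ≤ Real.log s := Real.log_nonneg hs1
    exact div_pos (by linarith) hs0
  have heq : h₁ s - K - L * g s = ((h₁ s - K) / g s - L) * g s := by
    field_simp
  rw [Real.norm_eq_abs, Real.norm_eq_abs, heq, abs_mul]
  exact mul_le_mul_of_nonneg_right hs (abs_nonneg _)
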